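/- Let Φ denote the standard normal CDF, let α ∈ (0, 1/2) and ψ ∈ [1/2, 1), and set c̄ = Φ^{-1}(1 − ψα) and g(θ) = θ + Φ^{-1}(1 − α + Φ(−c̄ − θ)). Then g is strictly increasing on the interval (Φ^{-1}(1 − α/2) − c̄, ∞), and g(θ) → ∞ as θ → ∞. -/

import Mathlib

/-!
STATEMENT 13: For α ∈ (0, 1/2), ψ ∈ [1/2, 1), c̄ = Φ⁻¹(1 − ψα) and
g(θ) = θ + Φ⁻¹(1 − α + Φ(−c̄ − θ)), the function g is strictly increasing on
(Φ⁻¹(1 − α/2) − c̄, ∞) and g(θ) → ∞ as θ → ∞.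
-/

open MeasureTheory ProbabilityTheory Filter

/-- The standard normal cumulative distribution function `Φ`. -/
noncomputable def Phi : ℝ → ℝ := fun x => ProbabilityTheory.cdf (gaussianReal 0 1) x

/-- The inverse `Φ⁻¹` of the standard normal CDF (junk values off `(0,1)`). -/
noncomputable def PhiInv : ℝ → ℝ := Function.invFun Phi

/-- `c̄ = Φ⁻¹(1 − ψα)`. -/
noncomputable def cbar (α ψ : ℝ) : ℝ := PhiInv (1 - ψ * α)

/-- `g(θ) = θ + Φ⁻¹(1 − α + Φ(−c̄ − θ))`. -/
noncomputable def gFun (α ψ : ℝ) (t : ℝ) : ℝ :=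
  t + PhiInv (1 - α + Phi (-cbar α ψ - t))

namespace GFunAux

lemma gpdf_pos (x : ℝ) : 0 < gaussianPDFReal 0 1 x :=
  gaussianPDFReal_pos _ _ _ one_ne_zero

lemma gpdf_int : Integrable (gaussianPDFReal 0 1) := integrable_gaussianPDFReal 0 1

lemma gpdf_neg (x : ℝ) : gaussianPDFReal 0 1 (-x) = gaussianPDFReal 0 1 x := by
  simp [gaussianPDFReal, neg_sq]

lemma gpdf_lt {x y : ℝ} (hx : 0 ≤ x) (hxy : x < y) :
    gaussianPDFReal 0 1 y < gaussianPDFReal 0 1 x := by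
  simp only [gaussianPDFReal, sub_zero, NNReal.coe_one, mul_one]
  have h2 : (0:ℝ) < (Real.sqrt (2 * Real.pi))⁻¹ := by
    rw [inv_pos]
    exact Real.sqrt_pos.mpr (by positivity)
  apply mul_lt_mul_of_pos_left _ h2
  apply Real.exp_lt_exp.mpr
  have : x ^ 2 < y ^ 2 := by nlinarith
  nlinarith

lemma gpdf_anti {x y : ℝ} (hx : 0 ≤ x) (hxy : x ≤ y) :
    gaussianPDFReal 0 1 y ≤ gaussianPDFReal 0 1 x := by
  rcases eq_or_lt_of_le hxy with rfl | h
  · exact le_refl _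
  · exact (gpdf_lt hx h).le

lemma Phi_eq (x : ℝ) : Phi x = ∫ t in Set.Iic x, gaussianPDFReal 0 1 t := by
  rw [Phi, cdf_eq_real, measureReal_def, gaussianReal_apply_eq_integral _ one_ne_zero,
    ENNReal.toReal_ofReal]
  exact setIntegral_nonneg measurableSet_Iic fun t _ => gaussianPDFReal_nonneg 0 1 t

lemma Phi_sub (a b : ℝ) : Phi b - Phi a = ∫ t in a..b, gaussianPDFReal 0 1 t := by
  rw [Phi_eq, Phi_eq]
  exact intervalIntegral.integral_Iic_sub_Iic gpdf_int.integrableOn gpdf_int.integrableOn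

lemma Phi_strictMono : StrictMono Phi := by
  intro a b hab
  have h := intervalIntegral.intervalIntegral_pos_of_pos (gpdf_int.intervalIntegrable) gpdf_pos hab
  have := Phi_sub a b
  linarith

lemma Phi_continuous : Continuous Phi := by
  have h : Phi = fun x => Phi 0 + ∫ t in (0:ℝ)..x, gaussianPDFReal 0 1 t := by
    funext x
    have := Phi_sub 0 x
    linarith
  rw [h]
  exact continuous_const.add (gpdf_int.continuous_primitive 0)

lemma Phi_total (x : ℝ) : Phi x + ∫ t in Set.Ioi x, gaussianPDFReal 0 1 t = 1 := by
  rw [Phi_eq, intervalIntegral.integral_Iic_add_Ioi gpdf_int.integrableOn gpdf_int.integrableOn,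
    integral_gaussianPDFReal_eq_one 0 one_ne_zero]

lemma Phi_neg (x : ℝ) : Phi (-x) = 1 - Phi x := by
  have h1 := integral_comp_neg_Iic (-x) (gaussianPDFReal 0 1)
  simp only [gpdf_neg, neg_neg] at h1
  have h2 := Phi_total x
  rw [Phi_eq (-x), h1]
  linarith

lemma Phi_mem (x : ℝ) : Phi x ∈ Set.Ioo (0:ℝ) 1 := by
  constructor
  · have h1 : Phi (x - 1) < Phi x := Phi_strictMono (by linarith)
    have h2 : 0 ≤ Phi (x - 1) := by simpa [Phi] using cdf_nonneg (μ := gaussianReal 0 1) (x-1)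
    linarith
  · have h1 : Phi x < Phi (x + 1) := Phi_strictMono (by linarith)
    have h2 : Phi (x + 1) ≤ 1 := by simpa [Phi] using cdf_le_one (μ := gaussianReal 0 1) (x+1)
    linarith

lemma Phi_surj {p : ℝ} (hp : p ∈ Set.Ioo (0:ℝ) 1) : ∃ x, Phi x = p := by
  have h0 : Tendsto Phi atBot (nhds 0) := by exact tendsto_cdf_atBot (gaussianReal 0 1)
  --
  have h1 : Tendsto Phi atTop (nhds 1) := by exact tendsto_cdf_atTop (gaussianReal 0 1)
  --
  obtain ⟨a, ha⟩ := (h0.eventually_lt_const hp.1).exists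
  obtain ⟨b, hb⟩ := (h1.eventually_const_lt hp.2).exists
  have hab : a ≤ b := by
    by_contra hcon
    have := Phi_strictMono.monotone (le_of_not_ge hcon)
    linarith
  have := intermediate_value_Icc hab Phi_continuous.continuousOn
  obtain ⟨x, _, hx⟩ := this ⟨ha.le, hb.le⟩
  exact ⟨x, hx⟩

lemma PhiInv_Phi (x : ℝ) : PhiInv (Phi x) = x :=
  Function.leftInverse_invFun Phi_strictMono.injective x

lemma Phi_PhiInv {p : ℝ} (hp : p ∈ Set.Ioo (0:ℝ) 1) : Phi (PhiInv p) = p :=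
  Function.invFun_eq (Phi_surj hp)

lemma Phi_zero : Phi 0 = 1/2 := by
  have := Phi_neg 0
  rw [neg_zero] at this
  linarith

lemma PhiInv_one_sub {p : ℝ} (hp : p ∈ Set.Ioo (0:ℝ) 1) :
    PhiInv (1 - p) = -PhiInv p := by
  have h : Phi (-PhiInv p) = 1 - p := by rw [Phi_neg, Phi_PhiInv hp]
  rw [← h, PhiInv_Phi]

/-- The core monotonicity estimate. -/
lemma core {α : ℝ} (hα : 0 < α) (hα' : α < 1/2) {a b : ℝ}
    (hab : a < b) (hb : b < PhiInv (α/2)) :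
    PhiInv (1 - α + Phi b) - b < PhiInv (1 - α + Phi a) - a := by
  have hhalf : α/2 ∈ Set.Ioo (0:ℝ) 1 := ⟨by linarith, by linarith⟩
  have hPbhalf : Phi b < α/2 := by
    have := Phi_strictMono hb
    rwa [Phi_PhiInv hhalf] at this
  have hPab : Phi a < Phi b := Phi_strictMono hab
  have hPa0 : 0 < Phi a := (Phi_mem a).1
  have hua : 1 - α + Phi a ∈ Set.Ioo (0:ℝ) 1 := ⟨by linarith, by linarith⟩
  have hub : 1 - α + Phi b ∈ Set.Ioo (0:ℝ) 1 := ⟨by linarith, by linarith⟩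
  set ya := PhiInv (1 - α + Phi a) with hya_def
  set yb := PhiInv (1 - α + Phi b) with hyb_def
  have hya : Phi ya = 1 - α + Phi a := Phi_PhiInv hua
  have hyb : Phi yb = 1 - α + Phi b := Phi_PhiInv hub
  have hya_pos : 0 < ya := by
    have : Phi 0 < Phi ya := by rw [Phi_zero, hya]; linarith
    exact Phi_strictMono.lt_iff_lt.mp this
  have hyab : ya < yb := by
    apply Phi_strictMono.lt_iff_lt.mp
    rw [hya, hyb]; linarith
  have hb_neg : b < 0 := by
    have : Phi (PhiInv (α/2)) < Phi 0 := by
      rw [Phi_PhiInv hhalf, Phi_zero]; linarith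
    have := Phi_strictMono.lt_iff_lt.mp this
    linarith
  have hyb_lt : yb < -b := by
    apply Phi_strictMono.lt_iff_lt.mp
    rw [hyb, Phi_neg]
    have hnb : -PhiInv (α/2) < -b := by linarith
    have : Phi (-PhiInv (α/2)) < Phi (-b) := Phi_strictMono hnb
    rw [Phi_neg, Phi_PhiInv hhalf] at this
    linarith
  -- integral bounds
  have hint : ∀ u v : ℝ, IntervalIntegrable (gaussianPDFReal 0 1) volume u v :=
    fun u v => gpdf_int.intervalIntegrable
  have hupper : ∫ t in a..b, gaussianPDFReal 0 1 t ≤ (b - a) * gaussianPDFReal 0 1 b := by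
    have h1 : ∫ t in a..b, gaussianPDFReal 0 1 t
        ≤ ∫ _t in a..b, gaussianPDFReal 0 1 b := by
      apply intervalIntegral.integral_mono_on hab.le (hint a b)
        (intervalIntegrable_const)
      intro t ht
      have h2 : -b ≤ -t := by linarith [ht.2]
      have := gpdf_anti (by linarith : (0:ℝ) ≤ -b) h2
      rwa [gpdf_neg, gpdf_neg] at this
    rwa [intervalIntegral.integral_const, smul_eq_mul] at h1
  have hlower : (yb - ya) * gaussianPDFReal 0 1 yb ≤ ∫ t in ya..yb, gaussianPDFReal 0 1 t := by
    have h1 : ∫ _t in ya..yb, gaussianPDFReal 0 1 yb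
        ≤ ∫ t in ya..yb, gaussianPDFReal 0 1 t := by
      apply intervalIntegral.integral_mono_on hyab.le intervalIntegrable_const (hint ya yb)
      intro t ht
      exact gpdf_anti (by linarith [ht.1] : (0:ℝ) ≤ t) ht.2
    rwa [intervalIntegral.integral_const, smul_eq_mul] at h1
  have hkey : ∫ t in ya..yb, gaussianPDFReal 0 1 t = ∫ t in a..b, gaussianPDFReal 0 1 t := by
    rw [← Phi_sub, ← Phi_sub, hya, hyb]
    ring
  have hfb_lt : gaussianPDFReal 0 1 b < gaussianPDFReal 0 1 yb := by
    have := gpdf_lt (hya_pos.trans hyab).le hyb_lt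
    rwa [gpdf_neg] at this
  have hfb_pos := gpdf_pos b
  have hmain : (yb - ya) * gaussianPDFReal 0 1 yb ≤ (b - a) * gaussianPDFReal 0 1 b := by
    rw [← hkey] at hupper
    linarith
  nlinarith [mul_pos (sub_pos.mpr hyab) (sub_pos.mpr hfb_lt)]

end GFunAux

theorem gFun_strictMonoOn_and_tendsto_atTop (α ψ : ℝ)
    (hα : 0 < α) (hα' : α < 1/2) (hψ : 1/2 ≤ ψ) (hψ' : ψ < 1) :
    StrictMonoOn (gFun α ψ) (Set.Ioi (PhiInv (1 - α / 2) - cbar α ψ)) ∧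
    Tendsto (gFun α ψ) atTop atTop := by
  open GFunAux in
  have hhalf : α/2 ∈ Set.Ioo (0:ℝ) 1 := ⟨by linarith, by linarith⟩
  have hrefl : PhiInv (1 - α/2) = -PhiInv (α/2) := GFunAux.PhiInv_one_sub hhalf
  have h1α : (1 - α) ∈ Set.Ioo (0:ℝ) 1 := ⟨by linarith, by linarith⟩
  constructor
  · intro s hs t ht hst
    simp only [Set.mem_Ioi] at hs ht
    have h1 : -cbar α ψ - t < -cbar α ψ - s := by linarith
    have h2 : -cbar α ψ - s < PhiInv (α/2) := by
      rw [hrefl] at hs; linarith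
    have hcore := GFunAux.core hα hα' h1 h2
    simp only [gFun]
    linarith
  · have hlow : ∀ᶠ θ in atTop, θ + PhiInv (1 - α) ≤ gFun α ψ θ := by
      filter_upwards [eventually_gt_atTop (PhiInv (1 - α/2) - cbar α ψ)] with θ hθ
      have h2 : -cbar α ψ - θ < PhiInv (α/2) := by
        rw [hrefl] at hθ; linarith
      have hPb : Phi (-cbar α ψ - θ) < α/2 := by
        have := GFunAux.Phi_strictMono h2
        rwa [GFunAux.Phi_PhiInv hhalf] at this
      have hP0 : 0 < Phi (-cbar α ψ - θ) := (GFunAux.Phi_mem _).1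
      have hu : 1 - α + Phi (-cbar α ψ - θ) ∈ Set.Ioo (0:ℝ) 1 :=
        ⟨by linarith, by linarith⟩
      have hlt : Phi (PhiInv (1 - α)) < Phi (PhiInv (1 - α + Phi (-cbar α ψ - θ))) := by
        rw [GFunAux.Phi_PhiInv h1α, GFunAux.Phi_PhiInv hu]
        linarith
      have := GFunAux.Phi_strictMono.lt_iff_lt.mp hlt
      simp only [gFun]
      linarith
    exact tendsto_atTop_mono' _ hlow (tendsto_atTop_add_const_right _ _ tendsto_id)
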